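/- If n ≥ 5 and n ≡ 0 or 16 (mod 31), then the largest minimum weight d(n,5) among all binary LCD [n,5] codes satisfies d(n,5) = ⌊16n/31⌋, ⌊16n/31⌋ − 1 or ⌊16n/31⌋ − 2. -/

import Mathlib

/-- The (Hamming) weight of a vector over `F_2`. -/
def wt {n : ℕ} (x : Fin n → ZMod 2) : ℕ :=
  Finset.card (Finset.univ.filter fun i => x i ≠ 0)

/-- The dual code of a binary code `C`, with respect to the standard inner product. -/
def dualCode {n : ℕ} (C : Submodule (ZMod 2) (Fin n → ZMod 2)) :
    Submodule (ZMod 2) (Fin n → ZMod 2) where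
  carrier := {x | ∀ y ∈ C, ∑ i, x i * y i = 0}
  add_mem' := by
    intro a b ha hb y hy
    simp [Pi.add_apply, add_mul, Finset.sum_add_distrib, ha y hy, hb y hy]
  zero_mem' := by
    intro y hy
    simp
  smul_mem' := by
    intro c a ha y hy
    simp only [Pi.smul_apply, smul_eq_mul, mul_assoc, ← Finset.mul_sum, ha y hy, mul_zero]

/-- A binary code is linear complementary dual (LCD) if it meets its dual trivially. -/
def IsLCD {n : ℕ} (C : Submodule (ZMod 2) (Fin n → ZMod 2)) : Prop :=
  C ⊓ dualCode C = ⊥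

/-- The minimum weight of a binary code: the smallest weight of a nonzero codeword. -/
noncomputable def minWt {n : ℕ} (C : Submodule (ZMod 2) (Fin n → ZMod 2)) : ℕ :=
  sInf {w | ∃ x ∈ C, x ≠ 0 ∧ wt x = w}

/-- `dLCD n k` is the largest minimum weight among all binary LCD `[n,k]` codes. -/
noncomputable def dLCD (n k : ℕ) : ℕ :=
  sSup {d | ∃ C : Submodule (ZMod 2) (Fin n → ZMod 2),
    Module.finrank (ZMod 2) C = k ∧ IsLCD C ∧ minWt C = d}

lemma card_filter_equiv {α β : Type*} [Fintype α] [Fintype β] (e : α ≃ β)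
    (p : β → Prop) [DecidablePred p] :
    (Finset.univ.filter fun a => p (e a)).card = (Finset.univ.filter p).card := by
  apply Finset.card_bij (fun a _ => e a)
  · intro a ha; simpa using (Finset.mem_filter.mp ha).2
  · intro a _ b _ hab; exact e.injective hab
  · intro b hb
    exact ⟨e.symm b, by simpa using (Finset.mem_filter.mp hb).2, by simp⟩

lemma card_filter_sum {α β : Type*} [Fintype α] [Fintype β] (p : α ⊕ β → Prop) [DecidablePred p] :
    (Finset.univ.filter p).card
      = (Finset.univ.filter fun a => p (Sum.inl a)).card
        + (Finset.univ.filter fun b => p (Sum.inr b)).card := by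
  rw [← Finset.card_toLeft_add_card_toRight]
  congr 1
  · apply Finset.card_bij (fun a _ => a) <;> intro a ha <;>
      simp_all [Finset.mem_toLeft, Finset.mem_filter]
  · apply Finset.card_bij (fun a _ => a) <;> intro a ha <;>
      simp_all [Finset.mem_toRight, Finset.mem_filter]

def sbit (j : Fin 5) (t : Fin 31) : ZMod 2 := if Nat.testBit (t.1+1) j.1 then 1 else 0

def sgen (u : Fin 5 → ZMod 2) (t : Fin 31) : ZMod 2 := ∑ j, u j * sbit j t

set_option maxHeartbeats 1000000 in
lemma sgen_card : ∀ u : Fin 5 → ZMod 2, u ≠ 0 →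
    (Finset.univ.filter fun t => sgen u t ≠ 0).card = 16 := by decide

set_option maxHeartbeats 4000000 in
set_option maxRecDepth 20000 in
lemma sgen_gram : ∀ u w : Fin 5 → ZMod 2, ∑ t, sgen u t * sgen w t = 0 := by decide

lemma exists_lcd_code (s r d : ℕ) (G : Fin 5 → Fin r → ZMod 2)
    (hd : 1 ≤ d)
    (hB : ∀ u : Fin 5 → ZMod 2, u ≠ 0 →
      d ≤ (Finset.univ.filter fun t => (∑ j, u j * G j t) ≠ 0).card)
    (hE : ∀ u : Fin 5 → ZMod 2,
      (∀ w : Fin 5 → ZMod 2, ∑ t, (∑ j, u j * G j t) * (∑ j, w j * G j t) = 0) → u = 0)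
    (n : ℕ) (hn : n = 31 * s + r) :
    ∃ C : Submodule (ZMod 2) (Fin n → ZMod 2),
      Module.finrank (ZMod 2) C = 5 ∧ IsLCD C ∧ 16 * s + d ≤ minWt C := by
  classical
  have hcard : Fintype.card (Fin n) = Fintype.card ((Fin s × Fin 31) ⊕ Fin r) := by
    simp [hn, Fintype.card_sum, Fintype.card_prod]
    ring
  let e : Fin n ≃ (Fin s × Fin 31) ⊕ Fin r := Fintype.equivOfCardEq hcard
  let φ : (Fin 5 → ZMod 2) → ((Fin s × Fin 31) ⊕ Fin r) → ZMod 2 := fun u =>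
    Sum.elim (fun bt => sgen u bt.2) (fun t => ∑ j, u j * G j t)
  let M : Matrix (Fin 5) (Fin n) (ZMod 2) := fun j i =>
    Sum.elim (fun bt : Fin s × Fin 31 => sbit j bt.2) (G j) (e i)
  let ψ := M.vecMulLinear
  have hψ : ∀ u i, ψ u i = φ u (e i) := by
    intro u i
    have h1 : ψ u i = ∑ j, u j * M j i := by
      simp [ψ, Matrix.vecMulLinear_apply, Matrix.vecMul, dotProduct]
    rw [h1]
    rcases h : e i with bt | t <;> simp [M, φ, sgen, h]
  have hker : ∀ u, ψ u = 0 → u = 0 := by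
    intro u hu
    by_contra h0
    obtain ⟨t, ht⟩ : ∃ t, (∑ j, u j * G j t) ≠ 0 := by
      by_contra hall
      push_neg at hall
      have hBc := hB u h0
      have : (Finset.univ.filter fun t => (∑ j, u j * G j t) ≠ 0) = ∅ := by
        apply Finset.filter_eq_empty_iff.mpr
        intro t _
        simpa using hall t
      rw [this] at hBc
      simp at hBc
      omega
    have hzero := congrFun hu (e.symm (Sum.inr t))
    rw [hψ, Equiv.apply_symm_apply] at hzero
    exact ht hzero
  have hinj : Function.Injective ψ := by
    rw [← LinearMap.ker_eq_bot, LinearMap.ker_eq_bot']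
    intro u hu
    exact hker u hu
  refine ⟨LinearMap.range ψ, ?_, ?_, ?_⟩
  · rw [LinearMap.finrank_range_of_inj hinj]
    simp [Module.finrank_fin_fun]
  · -- LCD
    rw [IsLCD, Submodule.eq_bot_iff]
    intro x hx
    obtain ⟨hxC, hxD⟩ := Submodule.mem_inf.mp hx
    obtain ⟨u, rfl⟩ := LinearMap.mem_range.mp hxC
    have h2 : ∀ y ∈ LinearMap.range ψ, ∑ i, ψ u i * y i = 0 := hxD
    suffices hu0 : u = 0 by rw [hu0]; exact map_zero ψ
    apply hE
    intro w
    have h3 := h2 (ψ w) (LinearMap.mem_range.mpr ⟨w, rfl⟩)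
    have h4 : ∑ i, ψ u i * ψ w i = ∑ k, φ u k * φ w k := by
      simp_rw [hψ]
      exact Equiv.sum_comp e fun k => φ u k * φ w k
    rw [h4, Fintype.sum_sum_type] at h3
    have h5 : ∑ bt : Fin s × Fin 31, φ u (Sum.inl bt) * φ w (Sum.inl bt) = 0 := by
      simp only [φ, Sum.elim_inl]
      rw [Fintype.sum_prod_type]
      simp [sgen_gram u w]
    rw [h5, zero_add] at h3
    simpa [φ] using h3
  · -- min weight
    have hwt : ∀ u, u ≠ 0 → 16 * s + d ≤ wt (ψ u) := by
      intro u hu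
      have h1 : wt (ψ u) = (Finset.univ.filter fun k => φ u k ≠ 0).card := by
        have heq : (Finset.univ.filter fun i => ψ u i ≠ 0)
            = (Finset.univ.filter fun i => φ u (e i) ≠ 0) := by
          apply Finset.filter_congr
          intro i _
          simp [hψ]
        rw [wt, heq]
        exact card_filter_equiv e (fun k => φ u k ≠ 0)
      rw [h1, card_filter_sum]
      have h2 : (Finset.univ.filter fun bt : Fin s × Fin 31 => φ u (Sum.inl bt) ≠ 0).card
          = s * 16 := by
        simp only [φ, Sum.elim_inl]
        show (Finset.univ.filter fun bt : Fin s × Fin 31 => sgen u bt.2 ≠ 0).card = s * 16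
        rw [← Finset.univ_product_univ]
        rw [Finset.filter_product_right (s := (Finset.univ : Finset (Fin s)))
          (t := (Finset.univ : Finset (Fin 31))) (fun t => sgen u t ≠ 0)]
        rw [Finset.card_product, sgen_card u hu]
        simp
      have h3 : d ≤ (Finset.univ.filter fun t : Fin r => φ u (Sum.inr t) ≠ 0).card := by
        exact hB u hu
      omega
    apply le_csInf
    · refine ⟨wt (ψ fun _ => 1), ψ (fun _ => 1), LinearMap.mem_range.mpr ⟨_, rfl⟩, ?_, rfl⟩
      intro h0
      have : (fun _ : Fin 5 => (1 : ZMod 2)) = 0 := hker _ h0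
      have := congrFun this 0
      simp at this
    · rintro b ⟨x, hxC, hx0, rfl⟩
      obtain ⟨u, rfl⟩ := LinearMap.mem_range.mp hxC
      have hu : u ≠ 0 := by
        rintro rfl
        exact hx0 (map_zero ψ)
      exact hwt u hu
lemma averaging {n : ℕ} (C : Submodule (ZMod 2) (Fin n → ZMod 2))
    (h5 : Module.finrank (ZMod 2) C = 5) : 31 * minWt C ≤ 16 * n := by
  classical
  set S : Finset (Fin n → ZMod 2) := Finset.univ.filter (· ∈ C) with hS
  clear_value S
  have hmem : ∀ x, x ∈ S ↔ x ∈ C := by intro x; simp [hS]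
  have hScard : S.card = 32 := by
    have h1 : Fintype.card C = 32 := by
      rw [Module.card_eq_pow_finrank (K := ZMod 2), h5, ZMod.card]; norm_num
    have h2 : Fintype.card C = Fintype.card {x : Fin n → ZMod 2 // x ∈ C} :=
      Fintype.card_congr (Equiv.subtypeEquivRight (by simp))
    rw [← Fintype.card_coe S, ← h1, h2]
    apply Fintype.card_congr
    exact Equiv.subtypeEquivRight (by intro x; simp [hmem])
  have h0S : (0 : Fin n → ZMod 2) ∈ S := (hmem 0).2 C.zero_mem
  have hone : ∀ a : ZMod 2, a ≠ 0 → a = 1 := by decide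
  have hcol : ∀ i, (S.filter fun x => x i ≠ 0).card ≤ 16 := by
    intro i
    by_cases hempty : (S.filter fun x => x i ≠ 0) = ∅
    · simp [hempty]
    · obtain ⟨x0, hx0⟩ := Finset.nonempty_iff_ne_empty.mpr hempty
      obtain ⟨hx0S, hx0i⟩ := Finset.mem_filter.mp hx0
      have hle : (S.filter fun x => x i ≠ 0).card ≤ (S.filter fun x => ¬ x i ≠ 0).card := by
        apply Finset.card_le_card_of_injOn (fun x => x + x0)
        · intro x hx
          obtain ⟨hxS, hxi⟩ := Finset.mem_filter.mp hx
          refine Finset.mem_filter.mpr ⟨(hmem _).2 (C.add_mem ((hmem _).1 hxS) ((hmem _).1 hx0S)), ?_⟩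
          have e1 : x i = 1 := hone _ hxi
          have e2 : x0 i = 1 := hone _ hx0i
          simp [Pi.add_apply, e1, e2]; decide
        · intro a _ b _ hab
          exact add_right_cancel hab
      have hsplit : (S.filter fun x => x i ≠ 0).card + (S.filter fun x => ¬ x i ≠ 0).card
          = S.card := Finset.card_filter_add_card_filter_not _
      generalize (S.filter fun x => x i ≠ 0).card = A at hle hsplit ⊢
      generalize (S.filter fun x => ¬ x i ≠ 0).card = B at hle hsplit
      omega
  have hsum : ∑ x ∈ S, wt x ≤ 16 * n := by
    have hswap : ∑ x ∈ S, wt x = ∑ i : Fin n, (S.filter fun x => x i ≠ 0).card := by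
      simp_rw [wt, Finset.card_filter]
      rw [Finset.sum_comm]
    rw [hswap]
    calc ∑ i : Fin n, (S.filter fun x => x i ≠ 0).card ≤ ∑ _i : Fin n, 16 :=
          Finset.sum_le_sum fun i _ => hcol i
      _ = 16 * n := by simp [Finset.sum_const, mul_comm]
  have hWmem : ∃ x ∈ C, x ≠ 0 ∧ wt x = minWt C := by
    have hCne : C ≠ ⊥ := by
      intro hbot
      rw [hbot] at h5
      simp [finrank_bot] at h5
    obtain ⟨x, hx, hx0⟩ := (Submodule.ne_bot_iff C).1 hCne
    have hne : {w | ∃ x ∈ C, x ≠ 0 ∧ wt x = w}.Nonempty := ⟨wt x, x, hx, hx0, rfl⟩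
    unfold minWt
    exact Nat.sInf_mem hne
  have hlow : ∀ x ∈ S.erase 0, minWt C ≤ wt x := by
    intro x hx
    obtain ⟨hne0, hxS⟩ := Finset.mem_erase.mp hx
    unfold minWt
    exact Nat.sInf_le ⟨x, (hmem x).1 hxS, hne0, rfl⟩
  have h31 : 31 * minWt C ≤ ∑ x ∈ S.erase 0, wt x := by
    have hcard : (S.erase 0).card = 31 := by rw [Finset.card_erase_of_mem h0S, hScard]
    calc 31 * minWt C = ∑ _x ∈ S.erase 0, minWt C := by
          rw [Finset.sum_const, hcard, smul_eq_mul]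
      _ ≤ ∑ x ∈ S.erase 0, wt x := Finset.sum_le_sum hlow
  have hsub : ∑ x ∈ S.erase 0, wt x ≤ ∑ x ∈ S, wt x :=
    Finset.sum_le_sum_of_subset (Finset.erase_subset _ _)
  omega

def G16 : Fin 5 → Fin 16 → ZMod 2 :=
![![1,0,1,1,0,0,1,0,1,1,0,0,1,1,0,1],
  ![0,1,1,1,1,1,1,1,0,0,1,0,1,0,0,0],
  ![1,1,1,1,0,1,1,1,1,0,0,0,1,1,1,0],
  ![1,0,0,1,1,0,1,1,1,0,0,1,1,0,1,1],
  ![1,1,1,1,1,0,0,1,0,0,1,1,0,1,1,1]]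

def G31 : Fin 5 → Fin 31 → ZMod 2 :=
![![0,1,1,1,0,1,0,1,1,0,0,1,0,1,1,0,0,0,0,0,0,0,1,1,1,0,0,1,1,1,1],
  ![1,0,0,0,1,1,0,0,0,1,1,1,0,1,1,0,1,0,1,0,0,0,0,1,1,1,0,1,0,1,1],
  ![1,0,0,1,0,1,1,1,0,0,0,0,0,1,0,1,0,0,1,0,1,1,1,1,0,1,0,1,1,0,0],
  ![0,0,0,0,0,0,1,0,1,1,0,0,1,1,0,1,1,0,0,1,1,0,0,0,1,1,1,1,1,1,1],
  ![0,1,0,0,0,0,1,1,1,0,0,0,1,0,1,0,1,1,1,1,1,0,1,0,0,0,0,1,0,0,1]]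

set_option maxHeartbeats 4000000 in
set_option maxRecDepth 20000 in
lemma hB16 : ∀ u : Fin 5 → ZMod 2, u ≠ 0 →
    6 ≤ (Finset.univ.filter fun t => (∑ j, u j * G16 j t) ≠ 0).card := by decide

set_option maxHeartbeats 4000000 in
set_option maxRecDepth 20000 in
lemma hE16 : ∀ u : Fin 5 → ZMod 2,
    (∀ w : Fin 5 → ZMod 2, ∑ t, (∑ j, u j * G16 j t) * (∑ j, w j * G16 j t) = 0) → u = 0 := by
  decide

set_option maxHeartbeats 4000000 in
set_option maxRecDepth 20000 in
lemma hB31 : ∀ u : Fin 5 → ZMod 2, u ≠ 0 →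
    14 ≤ (Finset.univ.filter fun t => (∑ j, u j * G31 j t) ≠ 0).card := by decide

set_option maxHeartbeats 4000000 in
set_option maxRecDepth 20000 in
lemma hE31 : ∀ u : Fin 5 → ZMod 2,
    (∀ w : Fin 5 → ZMod 2, ∑ t, (∑ j, u j * G31 j t) * (∑ j, w j * G31 j t) = 0) → u = 0 := by
  decide

theorem lcd_dim5_threeValues (n : ℕ) (hn : 5 ≤ n) (h : n % 31 = 0 ∨ n % 31 = 16) :
    dLCD n 5 = 16 * n / 31 ∨ dLCD n 5 = 16 * n / 31 - 1 ∨ dLCD n 5 = 16 * n / 31 - 2 := by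
  have hconstr : ∃ C : Submodule (ZMod 2) (Fin n → ZMod 2),
      Module.finrank (ZMod 2) C = 5 ∧ IsLCD C ∧ 16 * n / 31 - 2 ≤ minWt C := by
    rcases h with h0 | h16
    · obtain ⟨s, hs⟩ : ∃ s, n = 31 * s := ⟨n / 31, by omega⟩
      have hs1 : 1 ≤ s := by omega
      obtain ⟨C, h5, hl, hw⟩ := exists_lcd_code (s - 1) 31 14 G31 (by norm_num)
        hB31 hE31 n (by omega)
      exact ⟨C, h5, hl, by omega⟩
    · obtain ⟨s, hs⟩ : ∃ s, n = 31 * s + 16 := ⟨n / 31, by omega⟩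
      obtain ⟨C, h5, hl, hw⟩ := exists_lcd_code s 16 6 G16 (by norm_num)
        hB16 hE16 n hs
      exact ⟨C, h5, hl, by omega⟩
  obtain ⟨C, h5, hl, hw⟩ := hconstr
  have hub : ∀ dd ∈ {d | ∃ C : Submodule (ZMod 2) (Fin n → ZMod 2),
      Module.finrank (ZMod 2) C = 5 ∧ IsLCD C ∧ minWt C = d}, dd ≤ 16 * n / 31 := by
    rintro dd ⟨C', h5', _, rfl⟩
    have := averaging C' h5'
    omega
  have hmem : minWt C ∈ {d | ∃ C : Submodule (ZMod 2) (Fin n → ZMod 2),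
      Module.finrank (ZMod 2) C = 5 ∧ IsLCD C ∧ minWt C = d} := ⟨C, h5, hl, rfl⟩
  have hbdd : BddAbove {d | ∃ C : Submodule (ZMod 2) (Fin n → ZMod 2),
      Module.finrank (ZMod 2) C = 5 ∧ IsLCD C ∧ minWt C = d} :=
    ⟨16 * n / 31, fun dd hdd => hub dd hdd⟩
  have hge : minWt C ≤ dLCD n 5 := le_csSup hbdd hmem
  have hle : dLCD n 5 ≤ 16 * n / 31 := csSup_le ⟨_, hmem⟩ hub
  omega
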